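/- Sufficiency direction of the time-domain generalized KYP lemma for LTI systems (Lemma 4, (1) ⟹ (2)). Let A ∈ ℝ^{n×n}, B ∈ ℝ^{n×p}, C ∈ ℝ^{q×n}, D ∈ ℝ^{q×p} be constant matrices, let Ψ_f ∈ ℝ^{2×2} be symmetric (a finite-frequency weight matrix, e.g. the low-frequency weight [[−1,0],[0,ϖ_l²]] or the high-frequency weight [[1,0],[0,−ϖ_h²]]), let P ∈ ℝ^{n×n} be symmetric, Q ∈ ℝ^{n×n} symmetric positive semidefinite, and Π ∈ ℝ^{(q+p)×(q+p)} symmetric. Suppose the linear matrix inequality [A B; I 0]^T (Θ ⊗ P + Ψ_f ⊗ Q) [A B; I 0] + [C D; 0 I]^T Π [C D; 0 I] ⪯ 0 holds, where Θ = [[0,1],[1,0]]. Let x : [0,∞) → ℝⁿ be continuously differentiable with x(0) = 0, let u : [0,∞) → ℝ^p be continuous, assume ẋ(t) = A x(t) + B u(t) for all t ≥ 0, and set y(t) = C x(t) + D u(t). Assume the IQC: writing Z(t) for the n×2 matrix whose columns are ẋ(t) and x(t), the function t ↦ Z(t) Ψ_f Z(t)^T is integrable on [0,∞) and ∫₀^∞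 Z(t) Ψ_f Z(t)^T dt is positive semidefinite. If moreover t ↦ [y(t); u(t)]^T Π [y(t); u(t)] is integrable on [0,∞) and lim_{T→∞} x(T)^T P x(T) exists and is nonnegative, then ∫₀^∞ [y(t); u(t)]^T Π [y(t); u(t)] dt ≤ 0. -/

import Mathlib

open Matrix MeasureTheory
open scoped Matrix.Norms.L2Operator

/-- `Ψ ⊗ Q`: the Kronecker product of a `2×2` real matrix with an `n×n` real matrix,
realized as a `2n × 2n` block matrix. -/
noncomputable def kron2R {n : ℕ} (Ψ : Matrix (Fin 2) (Fin 2) ℝ)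
    (Q : Matrix (Fin n) (Fin n) ℝ) : Matrix (Fin n ⊕ Fin n) (Fin n ⊕ Fin n) ℝ :=
  Matrix.fromBlocks (Ψ 0 0 • Q) (Ψ 0 1 • Q) (Ψ 1 0 • Q) (Ψ 1 1 • Q)

/-- The quadratic form `z ↦ zᵀ H z` over the reals. -/
noncomputable def qfR {m : Type*} [Fintype m] (H : Matrix m m ℝ) (z : m → ℝ) : ℝ :=
  dotProduct z (H.mulVec z)

/-- The `n×2` matrix `Z(t)` whose columns are `ẋ(t)` and `x(t)`. -/
noncomputable def Zmat {n : ℕ} (xd xv : Fin n → ℝ) : Matrix (Fin n) (Fin 2) ℝ :=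
  Matrix.of fun i j => ![xd i, xv i] j

section Aux

lemma psd_diag_nonneg {m : Type*} [Fintype m] [DecidableEq m] {M : Matrix m m ℝ}
    (hM : M.PosSemidef) (i : m) : 0 ≤ M i i := by
  have := hM.dotProduct_mulVec_nonneg (Pi.single i 1)
  simpa [dotProduct, Matrix.mulVec, Pi.single_apply] using this

lemma psd_trace_nonneg {m : Type*} [Fintype m] [DecidableEq m] {M : Matrix m m ℝ}
    (hM : M.PosSemidef) : 0 ≤ M.trace :=
  Finset.sum_nonneg fun i _ => psd_diag_nonneg hM i

lemma trace_mul_psd_nonneg {m : Type*} [Fintype m] [DecidableEq m]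
    {Q S : Matrix m m ℝ} (hQ : Q.PosSemidef) (hS : S.PosSemidef) :
    0 ≤ (Q * S).trace := by
  obtain ⟨B, hB⟩ : ∃ B : Matrix m m ℝ, Q = Bᴴ * B := by
    open MatrixOrder in
    obtain ⟨B, hB⟩ := CStarAlgebra.nonneg_iff_eq_star_mul_self.mp hQ.nonneg
    exact ⟨B, hB⟩
  have h1 : (Q * S).trace = (B * S * Bᴴ).trace := by
    rw [hB, Matrix.mul_assoc, Matrix.trace_mul_comm, Matrix.mul_assoc]
  rw [h1]
  exact psd_trace_nonneg (hS.mul_mul_conjTranspose_same B)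

lemma qf_kron2R {n : ℕ} (Ψ : Matrix (Fin 2) (Fin 2) ℝ) (Q : Matrix (Fin n) (Fin n) ℝ)
    (a b : Fin n → ℝ) :
    qfR (kron2R Ψ Q) (Sum.elim a b) =
      Ψ 0 0 * (a ⬝ᵥ Q *ᵥ a) + Ψ 0 1 * (a ⬝ᵥ Q *ᵥ b) +
      Ψ 1 0 * (b ⬝ᵥ Q *ᵥ a) + Ψ 1 1 * (b ⬝ᵥ Q *ᵥ b) := by
  simp [qfR, kron2R, Matrix.fromBlocks_mulVec, sumElim_dotProduct_sumElim,
    dotProduct_add, Matrix.smul_mulVec, dotProduct_smul, smul_eq_mul]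
  ring

lemma mulmul_apply {m : Type*} [Fintype m] (W : Matrix (Fin 2) m ℝ)
    (Q : Matrix m m ℝ) (i j : Fin 2) :
    (W * Q * Wᵀ) i j = W i ⬝ᵥ Q *ᵥ W j := by
  simp only [Matrix.mul_apply, Matrix.mulVec, dotProduct, Matrix.transpose_apply,
    Finset.sum_mul, Finset.mul_sum]
  rw [Finset.sum_comm]
  exact Finset.sum_congr rfl fun k _ => Finset.sum_congr rfl fun l _ => by ring

lemma trace2 (Ψ R : Matrix (Fin 2) (Fin 2) ℝ) :
    (Ψ * R).trace = Ψ 0 0 * R 0 0 + Ψ 0 1 * R 1 0 + Ψ 1 0 * R 0 1 + Ψ 1 1 * R 1 1 := by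
  simp [Matrix.trace, Matrix.diag, Matrix.mul_apply, Fin.sum_univ_two]; ring

lemma trace_Q_ZΨZ {n : ℕ} (Ψ : Matrix (Fin 2) (Fin 2) ℝ) (Q : Matrix (Fin n) (Fin n) ℝ)
    (a b : Fin n → ℝ) :
    (Q * (Zmat a b * Ψ * (Zmat a b)ᵀ)).trace =
      Ψ 0 0 * (a ⬝ᵥ Q *ᵥ a) + Ψ 0 1 * (b ⬝ᵥ Q *ᵥ a) +
      Ψ 1 0 * (a ⬝ᵥ Q *ᵥ b) + Ψ 1 1 * (b ⬝ᵥ Q *ᵥ b) := by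
  have h1 : ∀ Z : Matrix (Fin n) (Fin 2) ℝ,
      (Q * (Z * Ψ * Zᵀ)).trace = (Ψ * (Zᵀ * Q * (Zᵀ)ᵀ)).trace := by
    intro Z
    rw [Matrix.trace_mul_comm Q, Matrix.mul_assoc (Z * Ψ), Matrix.mul_assoc Z Ψ,
      Matrix.trace_mul_comm Z, Matrix.transpose_transpose, Matrix.mul_assoc Ψ]
  have hW0 : (Zmat a b)ᵀ 0 = a := by funext k; simp [Zmat]
  have hW1 : (Zmat a b)ᵀ 1 = b := by funext k; simp [Zmat]
  rw [h1, trace2, mulmul_apply, mulmul_apply, mulmul_apply, mulmul_apply, hW0, hW1]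

lemma qf_conj {m m' : Type*} [Fintype m] [Fintype m'] (M : Matrix m' m ℝ)
    (N : Matrix m' m' ℝ) (z : m → ℝ) :
    qfR (Mᵀ * N * M) z = qfR N (M.mulVec z) := by
  rw [qfR, qfR, ← Matrix.mulVec_mulVec, ← Matrix.mulVec_mulVec,
    dotProduct_mulVec z Mᵀ, Matrix.vecMul_transpose]

lemma qf_add {m : Type*} [Fintype m] (M N : Matrix m m ℝ) (z : m → ℝ) :
    qfR (M + N) z = qfR M z + qfR N z := by
  rw [qfR, qfR, qfR, Matrix.add_mulVec, dotProduct_add]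

end Aux

/-- Sufficiency direction of the time-domain generalized KYP lemma for LTI systems
(Lemma 4, (1) ⟹ (2)). -/
theorem gKYP_sufficiency_time_domain_LTI
    {n p q : ℕ}
    (A : Matrix (Fin n) (Fin n) ℝ) (B : Matrix (Fin n) (Fin p) ℝ)
    (C : Matrix (Fin q) (Fin n) ℝ) (D : Matrix (Fin q) (Fin p) ℝ)
    (Ψf : Matrix (Fin 2) (Fin 2) ℝ) (hΨf : Ψf.IsSymm)
    (P : Matrix (Fin n) (Fin n) ℝ) (hP : P.IsSymm)
    (Q : Matrix (Fin n) (Fin n) ℝ) (hQ : Q.PosSemidef)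
    (Pi : Matrix (Fin q ⊕ Fin p) (Fin q ⊕ Fin p) ℝ) (hPi : Pi.IsSymm)
    -- the gKYP linear matrix inequality
    (hLMI : Matrix.PosSemidef
      (-((Matrix.fromBlocks A B (1 : Matrix (Fin n) (Fin n) ℝ) 0)ᵀ *
            (kron2R !![0,1;1,0] P + kron2R Ψf Q) *
            Matrix.fromBlocks A B 1 0 +
          (Matrix.fromBlocks C D (0 : Matrix (Fin p) (Fin n) ℝ) 1)ᵀ * Pi * Matrix.fromBlocks C D 0 1)))
    (x : ℝ → Fin n → ℝ) (x' : ℝ → Fin n → ℝ)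
    (hx : ∀ t ∈ Set.Ici (0:ℝ), HasDerivAt x (x' t) t)
    (hx'c : ContinuousOn x' (Set.Ici 0))
    (hx0 : x 0 = 0)
    (u : ℝ → Fin p → ℝ) (hu : ContinuousOn u (Set.Ici 0))
    (hode : ∀ t ∈ Set.Ici (0:ℝ), x' t = A.mulVec (x t) + B.mulVec (u t))
    (y : ℝ → Fin q → ℝ)
    (hy : ∀ t ∈ Set.Ici (0:ℝ), y t = C.mulVec (x t) + D.mulVec (u t))
    -- the IQC: the matrix ∫₀^∞ Z(t) Ψ_f Z(t)ᵀ dt is positive semidefinite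
    (hIQCint : IntegrableOn
      (fun t => Zmat (x' t) (x t) * Ψf * (Zmat (x' t) (x t))ᵀ) (Set.Ioi 0))
    (hIQC : Matrix.PosSemidef
      (∫ t in Set.Ioi (0:ℝ), Zmat (x' t) (x t) * Ψf * (Zmat (x' t) (x t))ᵀ))
    (hPerfInt : IntegrableOn (fun t => qfR Pi (Sum.elim (y t) (u t))) (Set.Ioi 0))
    (hlim : ∃ L : ℝ, 0 ≤ L ∧
      Filter.Tendsto (fun T => qfR P (x T)) Filter.atTop (nhds L)) :
    ∫ t in Set.Ioi (0:ℝ), qfR Pi (Sum.elim (y t) (u t)) ≤ 0 := by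
  obtain ⟨L, hL0, hLt⟩ := hlim
  set f : ℝ → ℝ := fun t => qfR Pi (Sum.elim (y t) (u t)) with hf
  set g : ℝ → ℝ := fun t => (Q * (Zmat (x' t) (x t) * Ψf * (Zmat (x' t) (x t))ᵀ)).trace
    with hgdef
  set h : ℝ → ℝ := fun t => (x' t) ⬝ᵥ P *ᵥ (x t) + (x t) ⬝ᵥ P *ᵥ (x' t) with hhdef
  -- continuity of x
  have hxc : ContinuousOn x (Set.Ici 0) := fun t ht =>
    (hx t ht).continuousAt.continuousWithinAt
  -- the trace functional as a continuous linear map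
  let φ : Matrix (Fin n) (Fin n) ℝ →L[ℝ] ℝ :=
    LinearMap.toContinuousLinearMap
      ((Matrix.traceLinearMap (Fin n) ℝ ℝ).comp (LinearMap.mulLeft ℝ Q))
  have hφ : ∀ S, φ S = (Q * S).trace := fun S => rfl
  -- integrability of g on (0, ∞) and nonnegativity of its integral
  have hg_int : IntegrableOn g (Set.Ioi 0) := by
    have := φ.integrable_comp hIQCint
    simpa [hgdef, hφ, IntegrableOn] using this
  have hg_nonneg : 0 ≤ ∫ t in Set.Ioi (0:ℝ), g t := by
    have hcomm := φ.integral_comp_comm hIQCint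
    have : (∫ t in Set.Ioi (0:ℝ), g t) =
        (Q * ∫ t in Set.Ioi (0:ℝ), Zmat (x' t) (x t) * Ψf * (Zmat (x' t) (x t))ᵀ).trace := by
      rw [← hφ, ← hcomm]; rfl
    rw [this]
    exact trace_mul_psd_nonneg hQ hIQC
  -- pointwise inequality : f + g + h ≤ 0 on [0, ∞)
  have hpoint : ∀ t ∈ Set.Ici (0:ℝ), f t + g t + h t ≤ 0 := by
    intro t ht
    set z : Fin n ⊕ Fin p → ℝ := Sum.elim (x t) (u t) with hz
    have hM1 : (Matrix.fromBlocks A B (1 : Matrix (Fin n) (Fin n) ℝ)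
        (0 : Matrix (Fin n) (Fin p) ℝ)).mulVec z = Sum.elim (x' t) (x t) := by
      rw [hz, Matrix.fromBlocks_mulVec]
      simp [hode t ht]
    have hM2 : (Matrix.fromBlocks C D (0 : Matrix (Fin p) (Fin n) ℝ)
        (1 : Matrix (Fin p) (Fin p) ℝ)).mulVec z = Sum.elim (y t) (u t) := by
      rw [hz, Matrix.fromBlocks_mulVec]
      simp [hy t ht]
    have hneg := hLMI.dotProduct_mulVec_nonneg z
    rw [Matrix.neg_mulVec, dotProduct_neg] at hneg
    have hqf : qfR ((Matrix.fromBlocks A B (1 : Matrix (Fin n) (Fin n) ℝ)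
              (0 : Matrix (Fin n) (Fin p) ℝ))ᵀ *
            (kron2R !![0,1;1,0] P + kron2R Ψf Q) *
            Matrix.fromBlocks A B (1 : Matrix (Fin n) (Fin n) ℝ)
              (0 : Matrix (Fin n) (Fin p) ℝ) +
          (Matrix.fromBlocks C D (0 : Matrix (Fin p) (Fin n) ℝ)
              (1 : Matrix (Fin p) (Fin p) ℝ))ᵀ * Pi *
            Matrix.fromBlocks C D (0 : Matrix (Fin p) (Fin n) ℝ)
              (1 : Matrix (Fin p) (Fin p) ℝ)) z ≤ 0 := by
      have hstar : star z = z := rfl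
      rw [hstar] at hneg
      rw [qfR]
      exact neg_nonneg.mp hneg
    rw [qf_add, qf_conj, qf_conj, hM1, hM2, qf_add, qf_kron2R, qf_kron2R] at hqf
    have hg_eq : g t = Ψf 0 0 * ((x' t) ⬝ᵥ Q *ᵥ (x' t)) + Ψf 0 1 * ((x' t) ⬝ᵥ Q *ᵥ (x t)) +
        Ψf 1 0 * ((x t) ⬝ᵥ Q *ᵥ (x' t)) + Ψf 1 1 * ((x t) ⬝ᵥ Q *ᵥ (x t)) := by
      show (Q * (Zmat (x' t) (x t) * Ψf * (Zmat (x' t) (x t))ᵀ)).trace = _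
      rw [trace_Q_ZΨZ]
      rw [hΨf.apply 0 1]
      ring
    have hΘ00 : (!![0,1;1,0] : Matrix (Fin 2) (Fin 2) ℝ) 0 0 = 0 := rfl
    have hΘ01 : (!![0,1;1,0] : Matrix (Fin 2) (Fin 2) ℝ) 0 1 = 1 := rfl
    have hΘ10 : (!![0,1;1,0] : Matrix (Fin 2) (Fin 2) ℝ) 1 0 = 1 := rfl
    have hΘ11 : (!![0,1;1,0] : Matrix (Fin 2) (Fin 2) ℝ) 1 1 = 0 := rfl
    rw [hΘ00, hΘ01, hΘ10, hΘ11] at hqf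
    rw [hhdef, hf]
    simp only []
    rw [hg_eq]
    linarith [hqf]
  -- continuity of h on [0, ∞)
  have hhc : ContinuousOn h (Set.Ici 0) := by
    have hd : ∀ (v w : ℝ → Fin n → ℝ), ContinuousOn v (Set.Ici (0:ℝ)) →
        ContinuousOn w (Set.Ici (0:ℝ)) →
        ContinuousOn (fun t => (v t) ⬝ᵥ P *ᵥ (w t)) (Set.Ici 0) := by
      intro v w hv hw
      have : (fun t => (v t) ⬝ᵥ P *ᵥ (w t)) =
          fun t => ∑ i, ∑ j, v t i * (P i j * w t j) := by
        funext t; simp [dotProduct, Matrix.mulVec, Finset.mul_sum]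
      rw [this]
      refine continuousOn_finset_sum _ fun i _ => continuousOn_finset_sum _ fun j _ => ?_
      exact (((continuous_apply i).comp_continuousOn hv)).mul
        (continuousOn_const.mul ((continuous_apply j).comp_continuousOn hw))
    exact (hd x' x hx'c hxc).add (hd x x' hxc hx'c)
  -- derivative of F := qfR P (x ·)
  have hF : ∀ t ∈ Set.Ici (0:ℝ), HasDerivAt (fun T => qfR P (x T)) (h t) t := by
    intro t ht
    have hcomp : ∀ i, HasDerivAt (fun T => x T i) (x' t i) t := fun i =>
      (hasDerivAt_pi.mp (hx t ht)) i
    have hsum : HasDerivAt (fun T => ∑ i, x T i * ∑ j, P i j * x T j)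
        (∑ i, (x' t i * ∑ j, P i j * x t j + x t i * ∑ j, P i j * x' t j)) t := by
      refine HasDerivAt.fun_sum fun i _ => ?_
      exact (hcomp i).mul (HasDerivAt.fun_sum fun j _ => (hcomp j).const_mul _)
    have heq1 : (fun T => qfR P (x T)) = fun T => ∑ i, x T i * ∑ j, P i j * x T j := by
      funext T; simp [qfR, dotProduct, Matrix.mulVec]
    have heq2 : h t = ∑ i, (x' t i * ∑ j, P i j * x t j + x t i * ∑ j, P i j * x' t j) := by
      rw [hhdef]
      simp [dotProduct, Matrix.mulVec, Finset.sum_add_distrib]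
    rw [heq1, heq2]
    exact hsum
  -- for each T ≥ 0 : ∫₀ᵀ f ≤ -∫₀ᵀ g - qfR P (x T)
  have key : ∀ T : ℝ, 0 ≤ T →
      (∫ t in (0:ℝ)..T, f t) ≤ -(∫ t in (0:ℝ)..T, g t) - qfR P (x T) := by
    intro T hT
    have hIccIci : Set.Icc (0:ℝ) T ⊆ Set.Ici 0 := Set.Icc_subset_Ici_self
    have hf_ii : IntervalIntegrable f volume 0 T :=
      (intervalIntegrable_iff_integrableOn_Ioc_of_le hT).2
        (hPerfInt.mono_set Set.Ioc_subset_Ioi_self)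
    have hg_ii : IntervalIntegrable g volume 0 T :=
      (intervalIntegrable_iff_integrableOn_Ioc_of_le hT).2
        (hg_int.mono_set Set.Ioc_subset_Ioi_self)
    have hh_ii : IntervalIntegrable h volume 0 T :=
      (hhc.mono (by rw [Set.uIcc_of_le hT]; exact hIccIci)).intervalIntegrable
    have hftc : (∫ t in (0:ℝ)..T, h t) = qfR P (x T) - qfR P (x 0) := by
      refine intervalIntegral.integral_eq_sub_of_hasDerivAt
        (f := fun T => qfR P (x T)) (f' := h) (fun t htmem => ?_) hh_ii
      rw [Set.uIcc_of_le hT] at htmem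
      exact hF t (hIccIci htmem)
    have hx0' : qfR P (x 0) = 0 := by simp [qfR, hx0, dotProduct]
    rw [hx0', sub_zero] at hftc
    have hsum_nonpos : (∫ t in (0:ℝ)..T, (f t + g t + h t)) ≤ 0 := by
      have := intervalIntegral.integral_nonneg (μ := volume) hT
        (f := fun t => -(f t + g t + h t))
        (fun s hs => by
          show (0:ℝ) ≤ -(f s + g s + h s)
          linarith [hpoint s (hIccIci hs)])
      rw [intervalIntegral.integral_neg] at this
      linarith
    have hsplit : (∫ t in (0:ℝ)..T, (f t + g t + h t)) =
        (∫ t in (0:ℝ)..T, f t) + (∫ t in (0:ℝ)..T, g t) + (∫ t in (0:ℝ)..T, h t) := by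
      rw [intervalIntegral.integral_add (hf_ii.add hg_ii) hh_ii,
        intervalIntegral.integral_add hf_ii hg_ii]
    rw [hsplit, hftc] at hsum_nonpos
    linarith
  -- take the limit T → ∞
  have hTf : Filter.Tendsto (fun T => ∫ t in (0:ℝ)..T, f t) Filter.atTop
      (nhds (∫ t in Set.Ioi (0:ℝ), f t)) :=
    intervalIntegral_tendsto_integral_Ioi 0 hPerfInt Filter.tendsto_id
  have hTg : Filter.Tendsto (fun T => ∫ t in (0:ℝ)..T, g t) Filter.atTop
      (nhds (∫ t in Set.Ioi (0:ℝ), g t)) :=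
    intervalIntegral_tendsto_integral_Ioi 0 hg_int Filter.tendsto_id
  have hrhs : Filter.Tendsto (fun T => -(∫ t in (0:ℝ)..T, g t) - qfR P (x T))
      Filter.atTop (nhds (-(∫ t in Set.Ioi (0:ℝ), g t) - L)) :=
    (hTg.neg).sub hLt
  have hineq : (∫ t in Set.Ioi (0:ℝ), f t) ≤ -(∫ t in Set.Ioi (0:ℝ), g t) - L := by
    refine le_of_tendsto_of_tendsto hTf hrhs ?_
    exact Filter.eventually_atTop.mpr ⟨0, fun T hT => key T hT⟩
  calc (∫ t in Set.Ioi (0:ℝ), f t) ≤ -(∫ t in Set.Ioi (0:ℝ), g t) - L := hineq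
    _ ≤ 0 := by linarith
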